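/- (Scenario 2: perfect prediction of y.) If X Xᵀ y = y (i.e., y lies in the column space of X), then ⟨Ŷ, Ẑ⟩ = ⟨y, z⟩; if in addition Ŷ and Ẑ are linearly independent, then condition (C) holds. -/
import Mathlib


open Matrix

/-- The Euclidean norm of a vector in `Fin n → ℝ`. -/
noncomputable def euclNorm {n : ℕ} (v : Fin n → ℝ) : ℝ := Real.sqrt (v ⬝ᵥ v)

lemma dotProduct_self_nonneg' {n : ℕ} (v : Fin n → ℝ) : 0 ≤ v ⬝ᵥ v :=
  Finset.sum_nonneg fun i _ => mul_self_nonneg (v i)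

lemma strict_cs {n : ℕ} (u v : Fin n → ℝ) (h : LinearIndependent ℝ ![u, v]) :
    (u ⬝ᵥ v) ^ 2 < (u ⬝ᵥ u) * (v ⬝ᵥ v) := by
  rw [LinearIndependent.pair_iff] at h
  have hv : v ≠ 0 := by
    intro hv0
    have := (h 0 1 (by simp [hv0])).2
    norm_num at this
  have hvv : 0 < v ⬝ᵥ v := by
    rcases lt_or_eq_of_le (dotProduct_self_nonneg' v) with h' | h'
    · exact h'
    · exact absurd ((dotProduct_self_eq_zero).mp h'.symm) hv
  set w : Fin n → ℝ := (v ⬝ᵥ v) • u - (u ⬝ᵥ v) • v with hw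
  have hwne : w ≠ 0 := by
    intro hw0
    have : v ⬝ᵥ v = 0 := (h (v ⬝ᵥ v) (-(u ⬝ᵥ v)) (by
      rw [neg_smul, ← sub_eq_add_neg, ← hw, hw0])).1
    exact hvv.ne' this
  have hww : 0 < w ⬝ᵥ w := by
    rcases lt_or_eq_of_le (dotProduct_self_nonneg' w) with h' | h'
    · exact h'
    · exact absurd ((dotProduct_self_eq_zero).mp h'.symm) hwne
  have hexp : w ⬝ᵥ w =
      (v ⬝ᵥ v) * ((u ⬝ᵥ u) * (v ⬝ᵥ v) - (u ⬝ᵥ v) ^ 2) := by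
    simp only [hw, sub_dotProduct, dotProduct_sub,
      smul_dotProduct, dotProduct_smul, smul_eq_mul]
    rw [dotProduct_comm v u]
    ring
  rw [hexp] at hww
  nlinarith [hww, hvv]

/-- Scenario 2: if `y` lies in the column space of `X` (i.e. `XXᵀy = y`), then
`⟨Ŷ,Ẑ⟩ = ⟨y,z⟩`; if moreover `Ŷ` and `Ẑ` are linearly independent, then condition
(C) holds. -/
theorem conditionC_of_perfect_prediction_of_y
    (N K : ℕ) (hN : 0 < N) (hK : 0 < K)
    (y z : Fin N → ℝ) (X : Matrix (Fin N) (Fin K) ℝ)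
    (hX : Xᵀ * X = 1)
    (Yh Zh : Fin K → ℝ) (hYh : Yh = Xᵀ.mulVec y) (hZh : Zh = Xᵀ.mulVec z)
    (hXy : X.mulVec (Xᵀ.mulVec y) = y) :
    Yh ⬝ᵥ Zh = y ⬝ᵥ z ∧
      (LinearIndependent ℝ ![Yh, Zh] →
        (-(euclNorm Yh * euclNorm Zh) + Yh ⬝ᵥ Zh) / 2 < y ⬝ᵥ z ∧
          y ⬝ᵥ z < (euclNorm Yh * euclNorm Zh + Yh ⬝ᵥ Zh) / 2) := by
  have key : Yh ⬝ᵥ Zh = y ⬝ᵥ z := by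
    rw [hYh, hZh, Matrix.dotProduct_mulVec, Matrix.vecMul_transpose, hXy]
  refine ⟨key, fun hli => ?_⟩
  have hcs := strict_cs Yh Zh hli
  have hP : |Yh ⬝ᵥ Zh| < euclNorm Yh * euclNorm Zh := by
    have h1 : euclNorm Yh * euclNorm Zh = Real.sqrt ((Yh ⬝ᵥ Yh) * (Zh ⬝ᵥ Zh)) := by
      rw [euclNorm, euclNorm, ← Real.sqrt_mul (dotProduct_self_nonneg' Yh)]
    have h2 : |Yh ⬝ᵥ Zh| = Real.sqrt ((Yh ⬝ᵥ Zh) ^ 2) := by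
      rw [Real.sqrt_sq_eq_abs]
    rw [h1, h2]
    exact Real.sqrt_lt_sqrt (sq_nonneg _) hcs
  rw [abs_lt] at hP
  constructor <;> [linarith [key]; linarith [key]]
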